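/- Let r > 0, c > 0 and α ∈ (0,1). If f : ℂ → ℂ is holomorphic on the strip S(r), bounded on S(r), and satisfies f( c·(log(1+n))^α ) = 0 for every integer n ≥ 0, then f is identically zero on S(r). -/

import Mathlib

set_option maxHeartbeats 1000000

open Complex Real Set Filter Topology

namespace Stmt7Aux

lemma re_exp_nonneg (k : ℝ) (hk : 0 < k) (r' : ℝ) (hkr : k * r' = π/2) (z : ℂ)
    (hz : |z.im| ≤ r') : 0 ≤ (Complex.exp (↑k * z)).re := by
  rw [Complex.exp_re]
  apply mul_nonneg (Real.exp_nonneg _)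
  have him : (↑k * z).im = k * z.im := by simp
  rw [him]
  apply Real.cos_nonneg_of_mem_Icc
  constructor
  · nlinarith [abs_le.1 hz |>.1, abs_le.1 hz |>.2]
  · nlinarith [abs_le.1 hz |>.2]

lemma re_exp_eq_zero (k : ℝ) (hk : 0 < k) (r' : ℝ) (hkr : k * r' = π/2) (z : ℂ)
    (hz : |z.im| = r') : (Complex.exp (↑k * z)).re = 0 := by
  rw [Complex.exp_re]
  have him : (↑k * z).im = k * z.im := by simp
  rw [him]
  rcases abs_eq (by nlinarith [abs_nonneg z.im, hz.symm ▸ abs_nonneg z.im] : (0:ℝ) ≤ r') |>.1 hz with h | h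
  · rw [h, hkr, Real.cos_pi_div_two, mul_zero]
  · rw [h, mul_neg, hkr, Real.cos_neg, Real.cos_pi_div_two, mul_zero]

lemma abs_sub_le_abs_add (w : ℂ) (t : ℝ) (ht : 0 < t) (hw : 0 ≤ w.re) :
    ‖w - ↑t‖ ≤ ‖w + ↑t‖ := by
  have h1 : Complex.normSq (w - ↑t) ≤ Complex.normSq (w + ↑t) := by
    simp only [Complex.normSq_apply, Complex.sub_re, Complex.sub_im, Complex.add_re,
      Complex.add_im, Complex.ofReal_re, Complex.ofReal_im]
    nlinarith
  simpa only [Complex.norm_def] using Real.sqrt_le_sqrt h1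

lemma abs_sub_eq_abs_add (w : ℂ) (t : ℝ) (hw : w.re = 0) :
    ‖w - ↑t‖ = ‖w + ↑t‖ := by
  rw [Complex.norm_def, Complex.norm_def]
  congr 1
  simp only [Complex.normSq_apply, Complex.sub_re, Complex.sub_im, Complex.add_re,
    Complex.add_im, Complex.ofReal_re, Complex.ofReal_im, hw]
  ring

lemma exp_add_ne (k : ℝ) (hk : 0 < k) (r' : ℝ) (hkr : k * r' = π/2) (t : ℝ) (ht : 0 < t)
    (z : ℂ) (hz : |z.im| < 2 * r') : Complex.exp (↑k * z) + ↑t ≠ 0 := by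
  intro h
  have heq : Complex.exp (↑k * z) = Complex.exp (↑(Real.log t) + ↑π * Complex.I) := by
    rw [Complex.exp_add, Complex.exp_pi_mul_I, ← Complex.ofReal_exp, Real.exp_log ht]
    linear_combination h
  rw [Complex.exp_eq_exp_iff_exists_int] at heq
  obtain ⟨n, hn⟩ := heq
  have him : k * z.im = π + n * (2 * π) := by
    have := congrArg Complex.im hn
    simpa using this
  have hr0 : 0 < r' := by nlinarith [Real.pi_pos]
  have habs : |k * z.im| < π := by
    rw [abs_mul, abs_of_pos hk]
    calc k * |z.im| < k * (2 * r') := by nlinarith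
    _ = π := by nlinarith
  have h1 : π + n * (2*π) = π * (1 + 2*n) := by ring
  have h2 : (1:ℝ) ≤ |(1 + 2*(n:ℝ))| := by
    have : ((1 + 2*n : ℤ) : ℝ) = 1 + 2*(n:ℝ) := by push_cast; ring
    rw [← this, ← Int.cast_abs]
    exact_mod_cast Int.one_le_abs (by omega)
  rw [him, h1, abs_mul, abs_of_pos Real.pi_pos] at habs
  nlinarith [Real.pi_pos]

lemma exp_sub_ne (k : ℝ) (hk : 0 < k) (r' : ℝ) (hkr : k * r' = π/2) (a : ℝ)
    (z : ℂ) (hz : |z.im| < 2 * r') (hza : z ≠ ↑a) :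
    Complex.exp (↑k * z) - ↑(Real.exp (k * a)) ≠ 0 := by
  intro h
  have heq : Complex.exp (↑k * z) = Complex.exp (↑k * ↑a) := by
    rw [← Complex.ofReal_mul, ← Complex.ofReal_exp] at *
    linear_combination h
  rw [Complex.exp_eq_exp_iff_exists_int] at heq
  obtain ⟨n, hn⟩ := heq
  have him : k * z.im = n * (2 * π) := by
    have := congrArg Complex.im hn
    simpa using this
  have hr0 : 0 < r' := by nlinarith [Real.pi_pos]
  have habs : |k * z.im| < π := by
    rw [abs_mul, abs_of_pos hk]
    calc k * |z.im| < k * (2 * r') := by nlinarith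
    _ = π := by nlinarith
  have hn0 : n = 0 := by
    by_contra hne
    have h2 : (1:ℝ) ≤ |(n:ℝ)| := by exact_mod_cast Int.one_le_abs (by omega)
    rw [him, abs_mul, abs_mul, abs_of_pos Real.pi_pos, abs_of_pos (by norm_num : (0:ℝ) < 2)] at habs
    nlinarith [Real.pi_pos]
  rw [hn0] at hn
  simp only [Int.cast_zero, zero_mul, add_zero] at hn
  apply hza
  have : (↑k : ℂ) ≠ 0 := by exact_mod_cast hk.ne'
  have hre := congrArg Complex.re hn
  have him2 := congrArg Complex.im hn
  exact mul_left_cancel₀ this hn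

lemma blaschke_step (r' M : ℝ) (hr' : 0 < r') (hM : 0 ≤ M) (U : Set ℂ) (hUo : IsOpen U)
    (hU1 : {z : ℂ | |z.im| ≤ r'} ⊆ U) (hU2 : U ⊆ {z : ℂ | |z.im| < 2*r'})
    (g : ℂ → ℂ) (hg : DifferentiableOn ℂ g U)
    (hgb : ∀ z : ℂ, |z.im| ≤ r' → ‖g z‖ ≤ M)
    (a : ℝ) (hga : g ↑a = 0) :
    ∃ g' : ℂ → ℂ, DifferentiableOn ℂ g' U ∧
      (∀ z ∈ U, g z = g' z * ((Complex.exp (↑(π/(2*r')) * z) - ↑(Real.exp (π/(2*r') * a))) /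
        (Complex.exp (↑(π/(2*r')) * z) + ↑(Real.exp (π/(2*r') * a))))) ∧
      ∀ z : ℂ, |z.im| ≤ r' → ‖g' z‖ ≤ M := by
  set k : ℝ := π/(2*r') with hk_def
  have hk : 0 < k := by positivity
  have hkr : k * r' = π/2 := by rw [hk_def]; field_simp
  set t : ℝ := Real.exp (k * a) with ht_def
  have ht : 0 < t := Real.exp_pos _
  have haU : (↑a : ℂ) ∈ U := hU1 (by simp [hr'.le])
  have haU' : U ∈ 𝓝 (↑a : ℂ) := hUo.mem_nhds haU
  have hEa : Complex.exp (↑k * ↑a) = (↑t : ℂ) := by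
    rw [← Complex.ofReal_mul, ← Complex.ofReal_exp]
  -- dslope of the exponential
  have hEdiff : Differentiable ℂ (fun w : ℂ => Complex.exp (↑k * w)) :=
    (differentiable_id.const_mul _).cexp
  have hdE : DifferentiableOn ℂ (dslope (fun w : ℂ => Complex.exp (↑k * w)) ↑a) U :=
    (Complex.differentiableOn_dslope haU').mpr hEdiff.differentiableOn
  have hdEne : ∀ z ∈ U, dslope (fun w : ℂ => Complex.exp (↑k * w)) ↑a z ≠ 0 := by
    intro z hz
    rcases eq_or_ne z ↑a with rfl | hza
    · rw [dslope_same]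
      have hd : HasDerivAt (fun w : ℂ => Complex.exp (↑k * w))
          (Complex.exp (↑k * ↑a) * ↑k) ↑a := by
        simpa using ((hasDerivAt_id ((a:ℂ))).const_mul (↑k : ℂ)).cexp
      rw [hd.deriv]
      exact mul_ne_zero (Complex.exp_ne_zero _) (by exact_mod_cast hk.ne')
    · rw [dslope_of_ne _ hza, slope_def_field]
      exact div_ne_zero (by rw [hEa]; exact exp_sub_ne k hk r' hkr a z (hU2 hz) hza)
        (sub_ne_zero.2 hza)
  set g' : ℂ → ℂ := fun z => dslope g ↑a z * (Complex.exp (↑k * z) + ↑t) /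
      dslope (fun w : ℂ => Complex.exp (↑k * w)) ↑a z with hg'_def
  have hg'diff : DifferentiableOn ℂ g' U :=
    (((Complex.differentiableOn_dslope haU').mpr hg).mul
      ((hEdiff.differentiableOn).add (differentiableOn_const _))).div hdE hdEne
  have hident : ∀ z ∈ U, g z = g' z *
      ((Complex.exp (↑k * z) - ↑t) / (Complex.exp (↑k * z) + ↑t)) := by
    intro z hz
    rcases eq_or_ne z ↑a with rfl | hza
    · rw [hga, hEa, sub_self, zero_div, mul_zero]
    · have h1 : z - ↑a ≠ 0 := sub_ne_zero.2 hza
      have h2 : Complex.exp (↑k * z) + ↑t ≠ 0 := exp_add_ne k hk r' hkr t ht z (hU2 hz)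
      have h3 : Complex.exp (↑k * z) - ↑t ≠ 0 :=
        exp_sub_ne k hk r' hkr a z (hU2 hz) hza
      rw [hg'_def]
      simp only [dslope_of_ne _ hza, slope_def_field, hga, hEa, sub_zero]
      field_simp
      rw [mul_assoc, mul_div_assoc, div_self, mul_one]
      exact mul_ne_zero (by rw [mul_comm]; exact h2) (by rw [mul_comm]; exact h3)
  refine ⟨g', hg'diff, hident, ?_⟩
  -- the multiplicative identity for absolute values
  have habs_ident : ∀ z ∈ U, ‖g z‖ = ‖g' z‖ *
      ‖(Complex.exp (↑k * z) - ↑t) / (Complex.exp (↑k * z) + ↑t)‖ := by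
    intro z hz
    rw [hident z hz, norm_mul]
  -- Phragmén–Lindelöf pieces
  have hfd : DiffContOnCl ℂ g' (Complex.im ⁻¹' Ioo (-r') r') := by
    constructor
    · exact hg'diff.mono (fun z hz => hU1 (by
        simp only [mem_preimage, mem_Ioo] at hz
        exact mem_setOf.2 (abs_le.2 ⟨hz.1.le, hz.2.le⟩)))
    · apply hg'diff.continuousOn.mono
      refine (closure_minimal (t := Complex.im ⁻¹' Icc (-r') r') ?_
        (isClosed_Icc.preimage Complex.continuous_im)).trans ?_
      · exact fun z hz => Ioo_subset_Icc_self hz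
      · exact fun z hz => hU1 (mem_setOf.2 (abs_le.2 hz))
  -- bound away from the zero: |g'| ≤ 3M when |Re z| is large
  set R : ℝ := max (|a| + 1) (max (Real.log (2*t) / k) (-(Real.log (t/2)) / k)) with hR_def
  have hfar : ∀ z : ℂ, R ≤ |z.re| → |z.im| ≤ r' → ‖g' z‖ ≤ 3 * M := by
    intro z hzre hzim
    have hzU : z ∈ U := hU1 hzim
    set s : ℝ := Real.exp (k * z.re) with hs_def
    have hs_abs : ‖Complex.exp (↑k * z)‖ = s := by
      rw [Complex.norm_exp]; congr 1; simp
    have hden_ne : Complex.exp (↑k * z) + ↑t ≠ 0 := exp_add_ne k hk r' hkr t ht z (hU2 hzU)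
    have hden_pos : 0 < ‖Complex.exp (↑k * z) + ↑t‖ :=
      norm_pos_iff.2 hden_ne
    have hden_le : ‖Complex.exp (↑k * z) + ↑t‖ ≤ s + t := by
      calc ‖Complex.exp (↑k * z) + ↑t‖
          ≤ ‖Complex.exp (↑k * z)‖ + ‖(↑t : ℂ)‖ :=
            norm_add_le _ _
        _ = s + t := by rw [hs_abs, Complex.norm_real, Real.norm_eq_abs, abs_of_pos ht]
    have hnum_ge : |s - t| ≤ ‖Complex.exp (↑k * z) - ↑t‖ := by
      have := abs_norm_sub_norm_le (Complex.exp (↑k * z)) (↑t : ℂ)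
      simpa [hs_abs, Complex.norm_real, Real.norm_eq_abs, abs_of_pos ht] using this
    have hcase : 2 * t ≤ s ∨ s ≤ t / 2 := by
      rcases le_or_gt R z.re with h | h
      · left
        have h1 : Real.log (2*t) / k ≤ z.re := le_trans (le_trans (le_max_left _ _)
          (le_max_right _ _)) h
        have h2 : Real.log (2*t) ≤ k * z.re := by
          rw [div_le_iff₀ hk] at h1; linarith [h1]
        calc 2*t = Real.exp (Real.log (2*t)) := (Real.exp_log (by linarith)).symm
          _ ≤ s := Real.exp_le_exp.2 h2
      · right
        have hneg : z.re ≤ -R := by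
          rcases abs_cases z.re with he | he
          · linarith [he.1]
          · linarith [he.1]
        have h1 : -(Real.log (t/2)) / k ≤ R := le_trans (le_max_right _ _) (le_max_right _ _)
        have h2 : k * z.re ≤ Real.log (t/2) := by
          have : -(Real.log (t/2)) ≤ k * R := by
            rw [div_le_iff₀ hk] at h1; linarith [h1]
          nlinarith [mul_le_mul_of_nonneg_left hneg hk.le]
        calc s ≤ Real.exp (Real.log (t/2)) := Real.exp_le_exp.2 h2
          _ = t/2 := Real.exp_log (by linarith)
    have hthird : (1:ℝ)/3 ≤ ‖(Complex.exp (↑k * z) - ↑t) /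
        (Complex.exp (↑k * z) + ↑t)‖ := by
      rw [norm_div, le_div_iff₀ hden_pos]
      have hst : (s + t)/3 ≤ |s - t| := by
        have hs_pos : 0 < s := Real.exp_pos _
        rcases hcase with h | h
        · rw [_root_.abs_of_nonneg (by linarith : (0:ℝ) ≤ s - t)]; linarith
        · rw [abs_of_nonpos (by linarith : s - t ≤ (0:ℝ))]; linarith
      calc 1/3 * ‖Complex.exp (↑k * z) + ↑t‖ ≤ 1/3 * (s + t) := by linarith [hden_le]
        _ = (s+t)/3 := by ring
        _ ≤ |s - t| := hst
        _ ≤ _ := hnum_ge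
    have hgz : ‖g z‖ ≤ M := hgb z hzim
    have := habs_ident z hzU
    nlinarith [norm_nonneg (g' z), norm_nonneg ((Complex.exp (↑k * z) - ↑t) /
      (Complex.exp (↑k * z) + ↑t))]
  have hB : ∃ cc < π / (r' - -r'), ∃ B, g' =O[Filter.comap (_root_.abs ∘ Complex.re) atTop ⊓
      Filter.principal (Complex.im ⁻¹' Ioo (-r') r')]
      fun z => Real.exp (B * Real.exp (cc * |z.re|)) := by
    refine ⟨0, by rw [sub_neg_eq_add]; positivity, 0, ?_⟩
    rw [Asymptotics.isBigO_iff]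
    refine ⟨3*M, ?_⟩
    rw [Filter.eventually_inf_principal]
    rw [Filter.eventually_comap]
    filter_upwards [eventually_ge_atTop R] with y hy
    intro z hz hzim
    simp only [Function.comp_apply] at hz
    simp only [mem_preimage, mem_Ioo] at hzim
    have h1 : ‖g' z‖ ≤ 3 * M := hfar z (hz ▸ hy) (abs_le.2 ⟨hzim.1.le, hzim.2.le⟩)
    simpa using h1
  have hbdry : ∀ z : ℂ, |z.im| = r' → ‖g' z‖ ≤ M := by
    intro z hzim
    have hzU : z ∈ U := hU1 (le_of_eq hzim)
    have hre0 : (Complex.exp (↑k * z)).re = 0 := re_exp_eq_zero k hk r' hkr z hzim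
    have heq : ‖Complex.exp (↑k * z) - ↑t‖ =
        ‖Complex.exp (↑k * z) + ↑t‖ := abs_sub_eq_abs_add _ t hre0
    have hden_ne : Complex.exp (↑k * z) + ↑t ≠ 0 :=
      exp_add_ne k hk r' hkr t ht z (hU2 hzU)
    have habs1 : ‖(Complex.exp (↑k * z) - ↑t) /
        (Complex.exp (↑k * z) + ↑t)‖ = 1 := by
      rw [norm_div, heq, div_self (norm_pos_iff.2 hden_ne).ne']
    have := habs_ident z hzU
    rw [habs1, mul_one] at this
    rw [← this]
    exact hgb z (le_of_eq hzim)
  intro z hz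
  rcases abs_le.1 hz with ⟨h1, h2⟩
  have := PhragmenLindelof.horizontal_strip hfd hB
    (fun w hw => hbdry w (by rw [hw, abs_neg, abs_of_pos hr']))
    (fun w hw => hbdry w (by rw [hw, abs_of_pos hr'])) h1 h2
  exact this

end Stmt7Aux

open Stmt7Aux

/-- The horizontal strip `S(r) = {z ∈ ℂ : |Im z| < r}`. -/
def strip (r : ℝ) : Set ℂ := {z : ℂ | |z.im| < r}

theorem stmt7 (r c α : ℝ) (hr : 0 < r) (hc : 0 < c) (hα : α ∈ Set.Ioo (0:ℝ) 1)
    (f : ℂ → ℂ) (hf : DifferentiableOn ℂ f (strip r))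
    (hb : ∃ M : ℝ, ∀ z ∈ strip r, ‖f z‖ ≤ M)
    (hzero : ∀ n : ℕ, f (((c * Real.log (1 + (n:ℝ)) ^ α : ℝ) : ℂ)) = 0) :
    ∀ z ∈ strip r, f z = 0 := by
  intro z₀ hz₀
  obtain ⟨M₀, hM₀⟩ := hb
  set M : ℝ := max M₀ 0 with hM_def
  have hM : 0 ≤ M := le_max_right _ _
  have hfb : ∀ z ∈ strip r, ‖f z‖ ≤ M :=
    fun z hz => le_trans (hM₀ z hz) (le_max_left _ _)
  have hz₀' : |z₀.im| < r := hz₀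
  set r' : ℝ := (|z₀.im| + r)/2 with hr'_def
  have hr'0 : 0 < r' := by have := abs_nonneg z₀.im; simp only [hr'_def]; linarith
  have hr'z : |z₀.im| < r' := by simp only [hr'_def]; linarith
  have hr'r : r' < r := by simp only [hr'_def]; linarith
  set k : ℝ := π/(2*r') with hk_def
  have hk : 0 < k := by positivity
  have hkr : k * r' = π/2 := by rw [hk_def]; field_simp
  set x : ℕ → ℝ := fun m => c * Real.log (1+(m:ℝ)) ^ α with hx_def
  set t : ℕ → ℝ := fun m => Real.exp (k * x m) with ht_def
  have ht : ∀ m, 0 < t m := fun m => Real.exp_pos _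
  set B : ℕ → ℂ → ℂ := fun m z =>
    (Complex.exp (↑k * z) - ↑(t m))/(Complex.exp (↑k * z) + ↑(t m)) with hB_def
  set U : Set ℂ := {z : ℂ | |z.im| < min r (2*r')} with hU_def
  have hUo : IsOpen U := isOpen_lt (Complex.continuous_im.abs) continuous_const
  have hU1 : {z : ℂ | |z.im| ≤ r'} ⊆ U := fun z hz =>
    mem_setOf.2 (lt_of_le_of_lt hz (lt_min hr'r (by linarith)))
  have hU2 : U ⊆ {z : ℂ | |z.im| < 2*r'} := fun z hz =>
    mem_setOf.2 (lt_of_lt_of_le hz (min_le_right _ _))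
  have hUstrip : U ⊆ strip r := fun z hz =>
    mem_setOf.2 (lt_of_lt_of_le hz (min_le_left _ _))
  -- the points x m are nonnegative reals, strictly increasing
  have hlog_nn : ∀ m : ℕ, 0 ≤ Real.log (1+(m:ℝ)) := fun m =>
    Real.log_nonneg (by push_cast; linarith [Nat.cast_nonneg (α := ℝ) m])
  have hxnn : ∀ m, 0 ≤ x m := fun m =>
    mul_nonneg hc.le (Real.rpow_nonneg (hlog_nn m) _)
  have hxmono : StrictMono x := by
    intro m n hmn
    apply mul_lt_mul_of_pos_left _ hc
    apply Real.rpow_lt_rpow (hlog_nn m) _ hα.1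
    apply Real.log_lt_log (by positivity)
    push_cast
    linarith [(Nat.cast_lt.2 hmn : (m:ℝ) < n)]
  have hxU : ∀ m : ℕ, ((x m : ℝ) : ℂ) ∈ U := fun m => hU1 (by simp [hr'0.le])
  have hExm : ∀ m : ℕ, Complex.exp (↑k * ((x m : ℝ):ℂ)) = ((t m : ℝ) : ℂ) := by
    intro m
    rw [← Complex.ofReal_mul, ← Complex.ofReal_exp]
  have hfzero : ∀ m : ℕ, f ((x m : ℝ):ℂ) = 0 := fun m => hzero m
  -- main induction: peeling off Blaschke factors
  have main : ∀ n : ℕ, ∃ g : ℂ → ℂ, DifferentiableOn ℂ g U ∧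
      (∀ z ∈ U, f z = g z * ∏ m ∈ Finset.range n, B m z) ∧
      ∀ z : ℂ, |z.im| ≤ r' → ‖g z‖ ≤ M := by
    intro n
    induction n with
    | zero =>
      exact ⟨f, hf.mono hUstrip, fun z _ => by simp,
        fun z hz => hfb z (mem_setOf.2 (lt_of_le_of_lt hz hr'r))⟩
    | succ n ih =>
      obtain ⟨g, hgd, hgid, hgb⟩ := ih
      have hgzero : g ((x n : ℝ):ℂ) = 0 := by
        have hid := hgid _ (hxU n)
        rw [hfzero n] at hid
        have hprod : (∏ m ∈ Finset.range n, B m ((x n : ℝ):ℂ)) ≠ 0 := by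
          rw [Finset.prod_ne_zero_iff]
          intro m hm
          have hmn : m < n := Finset.mem_range.1 hm
          simp only [hB_def]
          apply div_ne_zero
          · rw [hExm n, ← Complex.ofReal_sub]
            simp only [ne_eq, Complex.ofReal_eq_zero]
            have : t m < t n := Real.exp_lt_exp.2 (by
              have := hxmono hmn
              nlinarith)
            linarith
          · rw [hExm n, ← Complex.ofReal_add]
            simp only [ne_eq, Complex.ofReal_eq_zero]
            linarith [ht n, ht m]
        exact (mul_eq_zero.1 hid.symm).resolve_right hprod
      obtain ⟨g', hg'd, hg'id, hg'b⟩ := blaschke_step r' M hr'0 hM U hUo hU1 hU2 g hgd hgb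
        (x n) hgzero
      refine ⟨g', hg'd, ?_, hg'b⟩
      intro z hz
      rw [Finset.prod_range_succ, hgid z hz, hg'id z hz]
      ring
  have hz₀U : z₀ ∈ U := hU1 (mem_setOf.2 hr'z.le)
  have hbound : ∀ n : ℕ, ‖f z₀‖ ≤
      M * ∏ m ∈ Finset.range n, ‖B m z₀‖ := by
    intro n
    obtain ⟨g, hgd, hgid, hgb⟩ := main n
    rw [hgid z₀ hz₀U, norm_mul, norm_prod]
    exact mul_le_mul_of_nonneg_right (hgb z₀ hr'z.le)
      (Finset.prod_nonneg (fun m _ => norm_nonneg _))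
  -- analytic estimates at z₀
  set w : ℂ := Complex.exp (↑k * z₀) with hw_def
  have hw_re_pos : 0 < w.re := by
    rw [hw_def, Complex.exp_re]
    apply mul_pos (Real.exp_pos _)
    have him : (↑k * z₀).im = k * z₀.im := by simp
    rw [him]
    apply Real.cos_pos_of_mem_Ioo
    constructor
    · nlinarith [abs_lt.1 hr'z |>.1]
    · nlinarith [abs_lt.1 hr'z |>.2]
  have habsB_le_one : ∀ m : ℕ, ‖B m z₀‖ ≤ 1 := by
    intro m
    simp only [hB_def, norm_div]
    have hre : 0 ≤ w.re := hw_re_pos.le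
    have hden : w.re + t m ≤ ‖w + ↑(t m)‖ := by
      have := Complex.re_le_norm (w + ↑(t m))
      simpa using this
    have hden_pos : 0 < ‖w + ↑(t m)‖ := lt_of_lt_of_le (by linarith [ht m]) hden
    rw [div_le_one hden_pos]
    exact Stmt7Aux.abs_sub_le_abs_add w (t m) (ht m) hre
  have hlow : ∀ m : ℕ, ‖w‖ ≤ t m →
      ‖B m z₀‖ ≤ 1 - w.re/(2 * t m) := by
    intro m htm
    set A : ℝ := ‖w - ↑(t m)‖ with hA_def
    set D : ℝ := ‖w + ↑(t m)‖ with hD_def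
    have hA0 : 0 ≤ A := norm_nonneg _
    have hD_ge : w.re + t m ≤ D := by
      have := Complex.re_le_norm (w + ↑(t m)); simpa using this
    have hD_pos : 0 < D := lt_of_lt_of_le (by linarith [ht m]) hD_ge
    have hsq : D^2 - A^2 = 4 * t m * w.re := by
      rw [hA_def, hD_def, Complex.sq_norm, Complex.sq_norm]
      simp only [Complex.normSq_apply, Complex.add_re, Complex.add_im, Complex.sub_re,
        Complex.sub_im, Complex.ofReal_re, Complex.ofReal_im]
      ring
    have hD_le : D ≤ 2 * t m := by
      calc D ≤ ‖w‖ + ‖(↑(t m) : ℂ)‖ := norm_add_le _ _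
        _ ≤ t m + t m := by
            rw [Complex.norm_real, Real.norm_eq_abs, abs_of_pos (ht m)]; linarith
        _ = 2 * t m := by ring
    have hA_le : A ≤ D - w.re := by nlinarith
    simp only [hB_def, norm_div, ← hw_def, ← hA_def, ← hD_def]
    rw [div_le_iff₀ hD_pos]
    have h1 : w.re/(2 * t m) * D ≤ w.re := by
      rw [div_mul_eq_mul_div, div_le_iff₀ (by linarith [ht m] : (0:ℝ) < 2 * t m)]
      nlinarith
    nlinarith
  -- eventual lower bound on 1 - |B m z₀|
  have hlogT : Tendsto (fun m : ℕ => Real.log (1+(m:ℝ))) atTop atTop :=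
    Real.tendsto_log_atTop.comp (tendsto_atTop_add_const_left _ 1 tendsto_natCast_atTop_atTop)
  have hxT : Tendsto x atTop atTop := by
    have := (tendsto_rpow_atTop hα.1).comp hlogT
    exact this.const_mul_atTop hc
  have htT : Tendsto t atTop atTop :=
    Real.tendsto_exp_atTop.comp (hxT.const_mul_atTop hk)
  have hklog : ∀ᶠ m : ℕ in atTop, k * x m ≤ Real.log (1+(m:ℝ)) := by
    filter_upwards [hlogT.eventually_ge_atTop (max 1 ((k*c) ^ ((1:ℝ)/(1-α))))] with m hm
    set L : ℝ := Real.log (1+(m:ℝ)) with hL_def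
    have hL1 : (1:ℝ) ≤ L := le_trans (le_max_left _ _) hm
    have hL2 : (k*c) ^ ((1:ℝ)/(1-α)) ≤ L := le_trans (le_max_right _ _) hm
    have h1α : (0:ℝ) < 1 - α := by linarith [hα.2]
    have hkc : k*c ≤ L ^ (1-α) := by
      have h := Real.rpow_le_rpow (Real.rpow_nonneg (by positivity) _) hL2 h1α.le
      rwa [← Real.rpow_mul (by positivity : (0:ℝ) ≤ k*c), one_div,
        inv_mul_cancel₀ h1α.ne', Real.rpow_one] at h
    have hsplit : L = L ^ (1-α) * L ^ α := by
      rw [← Real.rpow_add (by linarith : (0:ℝ) < L)]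
      norm_num
    calc k * x m = (k*c) * L ^ α := by rw [hx_def]; ring
      _ ≤ L ^ (1-α) * L ^ α :=
          mul_le_mul_of_nonneg_right hkc (Real.rpow_nonneg (by linarith) _)
      _ = L := hsplit.symm
  have habsw : ∀ᶠ m : ℕ in atTop, ‖w‖ ≤ t m := htT.eventually_ge_atTop _
  have hev : ∀ᶠ m : ℕ in atTop,
      w.re/2 * (1/((m:ℝ)+1)) ≤ 1 - ‖B m z₀‖ := by
    filter_upwards [hklog, habsw] with m h1 h2
    have hB := hlow m h2
    have htle : t m ≤ (m:ℝ) + 1 := by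
      rw [ht_def]
      calc Real.exp (k * x m) ≤ Real.exp (Real.log (1+(m:ℝ))) := Real.exp_le_exp.2 h1
        _ = 1 + (m:ℝ) := Real.exp_log (by positivity)
        _ = (m:ℝ) + 1 := by ring
    have heq1 : w.re/2 * (1/((m:ℝ)+1)) = w.re/(2*((m:ℝ)+1)) := by
      field_simp
    have hle2 : w.re/(2*((m:ℝ)+1)) ≤ w.re/(2 * t m) :=
      div_le_div_of_nonneg_left hw_re_pos.le (by linarith [ht m]) (by linarith)
    linarith
  obtain ⟨m₀, hm₀⟩ := eventually_atTop.1 hev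
  set S : ℕ → ℝ := fun n => ∑ m ∈ Finset.range n, (1 - ‖B m z₀‖) with hS_def
  have hterm : ∀ m : ℕ, 0 ≤ 1 - ‖B m z₀‖ :=
    fun m => by linarith [habsB_le_one m]
  have hS_ge : ∀ n : ℕ,
      (∑ m ∈ Finset.Ico m₀ n, w.re/2 * (1/((m:ℝ)+1))) ≤ S n := by
    intro n
    calc (∑ m ∈ Finset.Ico m₀ n, w.re/2 * (1/((m:ℝ)+1)))
        ≤ ∑ m ∈ Finset.Ico m₀ n, (1 - ‖B m z₀‖) :=
          Finset.sum_le_sum (fun m hm => hm₀ m (Finset.mem_Ico.1 hm).1)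
      _ ≤ S n := by
          rw [hS_def]
          apply Finset.sum_le_sum_of_subset_of_nonneg
          · rw [Finset.range_eq_Ico]
            exact Finset.Ico_subset_Ico (Nat.zero_le _) le_rfl
          · exact fun m _ _ => hterm m
  have hT : Tendsto (fun n => ∑ m ∈ Finset.Ico m₀ n, w.re/2 * (1/((m:ℝ)+1)))
      atTop atTop := by
    have hH := Real.tendsto_sum_range_one_div_nat_succ_atTop
    have hH2 : Tendsto (fun n => w.re/2 * ((∑ i ∈ Finset.range n, (1/((i:ℝ)+1))) -
        (∑ i ∈ Finset.range m₀, (1/((i:ℝ)+1))))) atTop atTop := by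
      apply Tendsto.const_mul_atTop (by linarith : (0:ℝ) < w.re/2)
      exact tendsto_atTop_add_const_right _ _ hH
    apply hH2.congr'
    filter_upwards [eventually_ge_atTop m₀] with n hn
    rw [← Finset.sum_Ico_eq_sub _ hn, Finset.mul_sum]
  have hStend : Tendsto S atTop atTop := tendsto_atTop_mono hS_ge hT
  have hprod_le : ∀ n : ℕ, (∏ m ∈ Finset.range n, ‖B m z₀‖) ≤
      Real.exp (-(S n)) := by
    intro n
    calc (∏ m ∈ Finset.range n, ‖B m z₀‖)
        ≤ ∏ m ∈ Finset.range n, Real.exp (‖B m z₀‖ - 1) :=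
          Finset.prod_le_prod (fun m _ => norm_nonneg _)
            (fun m _ => by linarith [Real.add_one_le_exp (‖B m z₀‖ - 1)])
      _ = Real.exp (∑ m ∈ Finset.range n, (‖B m z₀‖ - 1)) :=
          (Real.exp_sum _ _).symm
      _ = Real.exp (-(S n)) := by
          congr 1
          rw [hS_def, ← Finset.sum_neg_distrib]
          apply Finset.sum_congr rfl
          intro m _
          ring
  have hexp0 : Tendsto (fun n => Real.exp (-(S n))) atTop (𝓝 0) :=
    Real.tendsto_exp_atBot.comp (tendsto_neg_atTop_atBot.comp hStend)
  have hprod0 : Tendsto (fun n => ∏ m ∈ Finset.range n, ‖B m z₀‖)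
      atTop (𝓝 0) :=
    squeeze_zero (fun n => Finset.prod_nonneg (fun m _ => norm_nonneg _))
      hprod_le hexp0
  have hfinal : ‖f z₀‖ ≤ 0 := by
    have hlim : Tendsto (fun n => M * ∏ m ∈ Finset.range n, ‖B m z₀‖)
        atTop (𝓝 0) := by
      have := hprod0.const_mul M
      rwa [mul_zero] at this
    exact ge_of_tendsto' hlim hbound
  have := le_antisymm hfinal (norm_nonneg _)
  exact norm_eq_zero.1 this
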